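/- Let S ≥ 0 be a real number and let b ∈ ℝʳ have at least one strictly positive entry. Set β = ‖[b]₊‖ > 0, Δ = β²/4 + S³/27, and t = ∛(β/2 − √Δ) + ∛(β/2 + √Δ), where ∛ denotes the real cube root. Then x* = t · [b]₊ / ‖[b]₊‖ is the unique minimizer of h(x) = ‖x‖⁴ + 2S‖x‖² − 4bᵀx over the nonnegative orthant {x ∈ ℝʳ : x ≥ 0}. -/

import Mathlib

/-- The real cube root: the unique real `y` with `y ^ 3 = x`. -/
noncomputable def cbrt (x : ℝ) : ℝ :=
  if 0 ≤ x then x ^ ((1 : ℝ) / 3) else -((-x) ^ ((1 : ℝ) / 3))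

lemma cbrt_cube (x : ℝ) : (cbrt x) ^ 3 = x := by
  unfold cbrt
  split_ifs with hx
  · rw [← Real.rpow_natCast (x ^ ((1:ℝ)/3)) 3, ← Real.rpow_mul hx]
    norm_num
  · push_neg at hx
    have h1 : (0:ℝ) ≤ -x := by linarith
    rw [neg_pow]
    rw [← Real.rpow_natCast ((-x) ^ ((1:ℝ)/3)) 3, ← Real.rpow_mul h1]
    norm_num

lemma cube_inj {a b : ℝ} (h : a ^ 3 = b ^ 3) : a = b :=
  (Odd.strictMono_pow (R := ℝ) (n := 3) ⟨1, by norm_num⟩).injective h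

/-- if `S ≥ 0` and `b` has at least one strictly positive entry, then with
`β = ‖[b]₊‖`, `Δ = β²/4 + S³/27`, `t = ∛(β/2 − √Δ) + ∛(β/2 + √Δ)`, the point
`x* = t·[b]₊/‖[b]₊‖` is the unique minimizer of `h(x) = ‖x‖⁴ + 2S‖x‖² − 4bᵀx`
over the nonnegative orthant (and `β > 0`). -/
theorem stmt_9 {r : ℕ} (S : ℝ) (hS : 0 ≤ S)
    (b : EuclideanSpace ℝ (Fin r)) (hbpos : ∃ i, 0 < b i)
    (bp : EuclideanSpace ℝ (Fin r)) (hbp : ∀ i, bp i = max (b i) 0)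
    (β : ℝ) (hβ : β = ‖bp‖)
    (Δ : ℝ) (hΔ : Δ = β ^ 2 / 4 + S ^ 3 / 27)
    (t : ℝ) (ht : t = cbrt (β / 2 - Real.sqrt Δ) + cbrt (β / 2 + Real.sqrt Δ))
    (h : EuclideanSpace ℝ (Fin r) → ℝ)
    (hh : ∀ x, h x = ‖x‖ ^ 4 + 2 * S * ‖x‖ ^ 2 - 4 * ∑ i, b i * x i)
    (xstar : EuclideanSpace ℝ (Fin r)) (hxstar : xstar = (t / ‖bp‖) • bp) :
    0 < β ∧
    (∀ i, 0 ≤ xstar i) ∧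
    (∀ x : EuclideanSpace ℝ (Fin r), (∀ i, 0 ≤ x i) → h xstar ≤ h x) ∧
    (∀ x : EuclideanSpace ℝ (Fin r), (∀ i, 0 ≤ x i) →
      (∀ y : EuclideanSpace ℝ (Fin r), (∀ i, 0 ≤ y i) → h x ≤ h y) → x = xstar) := by
  obtain ⟨i₀, hi₀⟩ := hbpos
  -- β > 0
  have hbpne : bp ≠ 0 := by
    intro hc
    have : bp i₀ = 0 := by rw [hc]; rfl
    rw [hbp i₀] at this
    have : 0 < max (b i₀) 0 := lt_max_of_lt_left hi₀
    linarith
  have hβpos : 0 < β := hβ ▸ norm_pos_iff.mpr hbpne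
  -- the cubic identity t³ + S t = β
  have hΔ0 : 0 ≤ Δ := by
    have h3 : 0 ≤ S ^ 3 := pow_nonneg hS 3
    rw [hΔ]; nlinarith [sq_nonneg β]
  have hsq : Real.sqrt Δ ^ 2 = Δ := Real.sq_sqrt hΔ0
  set a := cbrt (β / 2 - Real.sqrt Δ) with ha
  set c := cbrt (β / 2 + Real.sqrt Δ) with hc
  have ha3 : a ^ 3 = β / 2 - Real.sqrt Δ := cbrt_cube _
  have hc3 : c ^ 3 = β / 2 + Real.sqrt Δ := cbrt_cube _
  have hac : a * c = -S / 3 := by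
    apply cube_inj
    have : (a * c) ^ 3 = a ^ 3 * c ^ 3 := by ring
    rw [this, ha3, hc3]
    linear_combination (-1) * hsq - hΔ
  have hcubic : t ^ 3 + S * t = β := by
    rw [ht]
    linear_combination ha3 + hc3 + 3 * (a + c) * hac
  have htpos : 0 < t := by
    by_contra h'
    push_neg at h'
    have h3 : t ^ 3 ≤ 0 := Odd.pow_nonpos ⟨1, by norm_num⟩ h'
    have h4 : S * t ≤ 0 := mul_nonpos_of_nonneg_of_nonpos hS h'
    linarith
  -- inner products / sums
  have hbp_nonneg : ∀ i, 0 ≤ bp i := fun i => (hbp i) ▸ le_max_right _ _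
  have hnormbp2 : ∑ i, bp i * bp i = β ^ 2 := by
    have := real_inner_self_eq_norm_sq bp
    rw [PiLp.inner_apply] at this
    simpa [RCLike.inner_apply, hβ, sq] using this
  have hbbp : ∑ i, b i * bp i = β ^ 2 := by
    rw [← hnormbp2]
    apply Finset.sum_congr rfl
    intro i _
    rw [hbp i]
    rcases le_or_gt 0 (b i) with hbi | hbi
    · rw [max_eq_left hbi]
    · rw [max_eq_right hbi.le]; ring
  -- key bound : b·x ≤ β‖x‖ for x ≥ 0, via bp and Cauchy–Schwarz
  have hkey : ∀ x : EuclideanSpace ℝ (Fin r), (∀ i, 0 ≤ x i) →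
      ∑ i, b i * x i ≤ ∑ i, bp i * x i ∧ ∑ i, bp i * x i ≤ β * ‖x‖ := by
    intro x hx
    constructor
    · apply Finset.sum_le_sum
      intro i _
      have : b i ≤ bp i := (hbp i) ▸ le_max_left _ _
      exact mul_le_mul_of_nonneg_right this (hx i)
    · have h1 : ∑ i, bp i * x i = (inner ℝ bp x : ℝ) := by
        rw [PiLp.inner_apply]; simp [RCLike.inner_apply, mul_comm]
      rw [h1, hβ]
      exact real_inner_le_norm bp x
  -- facts about xstar
  have hxstar_apply : ∀ i, xstar i = (t / β) * bp i := by
    intro i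
    rw [hxstar, hβ]
    simp [PiLp.smul_apply, smul_eq_mul, hβ]
  have hxstar_nonneg : ∀ i, 0 ≤ xstar i := by
    intro i
    rw [hxstar_apply i]
    exact mul_nonneg (div_pos htpos hβpos).le (hbp_nonneg i)
  have hxstar_norm : ‖xstar‖ = t := by
    rw [hxstar, norm_smul, ← hβ, Real.norm_eq_abs,
      abs_of_pos (div_pos htpos hβpos), div_mul_cancel₀ _ (ne_of_gt hβpos)]
  have hxstar_sum : ∑ i, b i * xstar i = t * β := by
    have : ∑ i, b i * xstar i = (t / β) * ∑ i, b i * bp i := by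
      rw [Finset.mul_sum]
      apply Finset.sum_congr rfl
      intro i _
      rw [hxstar_apply i]; ring
    rw [this, hbbp]
    field_simp
  have hhxstar : h xstar = t ^ 4 + 2 * S * t ^ 2 - 4 * (t * β) := by
    rw [hh, hxstar_norm, hxstar_sum]
  -- scalar minimization: g(s) ≥ g(t) for s ≥ 0
  have hg : ∀ s : ℝ, 0 ≤ s →
      t ^ 4 + 2 * S * t ^ 2 - 4 * (t * β) ≤ s ^ 4 + 2 * S * s ^ 2 - 4 * (β * s) := by
    intro s hs
    nlinarith [sq_nonneg (s - t), mul_nonneg hS (sq_nonneg (s - t)),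
      mul_nonneg (mul_nonneg hs htpos.le) (sq_nonneg (s - t)),
      mul_nonneg (sq_nonneg t) (sq_nonneg (s - t)), hcubic]
  have hg_strict : ∀ s : ℝ, 0 ≤ s → s ≠ t →
      t ^ 4 + 2 * S * t ^ 2 - 4 * (t * β) < s ^ 4 + 2 * S * s ^ 2 - 4 * (β * s) := by
    intro s hs hne
    have h1 : 0 < (s - t) ^ 2 := pow_two_pos_of_ne_zero (sub_ne_zero.mpr hne)
    nlinarith [mul_nonneg hS (sq_nonneg (s - t)),
      mul_nonneg (mul_nonneg hs htpos.le) (sq_nonneg (s - t)),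
      mul_pos (mul_pos htpos htpos) h1, hcubic]
  -- minimality
  have hmin : ∀ x : EuclideanSpace ℝ (Fin r), (∀ i, 0 ≤ x i) → h xstar ≤ h x := by
    intro x hx
    obtain ⟨h1, h2⟩ := hkey x hx
    rw [hhxstar, hh]
    have := hg ‖x‖ (norm_nonneg x)
    linarith [h1, h2, this]
  refine ⟨hβpos, hxstar_nonneg, hmin, ?_⟩
  -- uniqueness
  intro x hx hux
  have heq : h x = h xstar := le_antisymm (hux xstar hxstar_nonneg) (hmin x hx)
  obtain ⟨h1, h2⟩ := hkey x hx
  -- first, ‖x‖ = t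
  have hns : ‖x‖ = t := by
    by_contra hne
    have := hg_strict ‖x‖ (norm_nonneg x) hne
    rw [hh x] at heq
    rw [hhxstar] at heq
    linarith [h1, h2]
  -- then, b·x = β‖x‖, so bp·x = ‖bp‖‖x‖
  have hsum : ∑ i, b i * x i = β * ‖x‖ := by
    apply le_antisymm (le_trans h1 h2)
    have hsum' : ∑ i, b i * x i = t * β := by
      rw [hh x, hns] at heq
      rw [hhxstar] at heq
      linarith
    rw [hns, hsum', mul_comm]
  have hcs : (inner ℝ bp x : ℝ) = ‖bp‖ * ‖x‖ := by
    have hip : (inner ℝ bp x : ℝ) = ∑ i, bp i * x i := by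
      rw [PiLp.inner_apply]; simp [RCLike.inner_apply, mul_comm]
    apply le_antisymm (real_inner_le_norm bp x)
    rw [hip, ← hβ]
    calc β * ‖x‖ = ∑ i, b i * x i := hsum.symm
      _ ≤ ∑ i, bp i * x i := h1
  have hsmul : ‖x‖ • bp = ‖bp‖ • x := inner_eq_norm_mul_iff_real.mp hcs
  rw [hns] at hsmul
  -- conclude x = xstar
  have hβne : ‖bp‖ ≠ 0 := norm_ne_zero_iff.mpr hbpne
  rw [hxstar]
  have hx2 : (t / ‖bp‖) • bp = x := by
    rw [div_eq_mul_inv, mul_comm, mul_smul, hsmul, smul_smul,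
      inv_mul_cancel₀ hβne, one_smul]
  exact hx2.symm
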